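/- Let A be a finite-dimensional real left-symmetric algebra, and let A_ℂ = ℂ ⊗_ℝ A be its complexification, equipped with the ℂ-bilinear multiplication obtained by base change of the multiplication of A (so that (a⊗x)·(b⊗y) = ab ⊗ x·y). Then A is complete if and only if A_ℂ is complete. -/

import Mathlib

open TensorProduct Polynomial

/-- If `Mb + t • Mc` has charpoly `X ^ n` for all real `t`, then so does `Mb + t₀ • Mc`
for every complex `t₀`. -/
lemma matrix_key {ι : Type*} [Fintype ι] [DecidableEq ι] (Mb Mc : Matrix ι ι ℂ)
    (h : ∀ t : ℝ, (Mb + (t:ℂ) • Mc).charpoly = X ^ Fintype.card ι) (t₀ : ℂ) :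
    (Mb + t₀ • Mc).charpoly = X ^ Fintype.card ι := by
  set n := Fintype.card ι
  set D : Matrix ι ι (Polynomial ℂ) :=
    Mb.map Polynomial.C + (X : Polynomial ℂ) • Mc.map Polynomial.C with hD
  have hmap : ∀ a : ℂ, D.map (evalRingHom a) = Mb + a • Mc := by
    intro a
    ext i j
    simp only [hD, Matrix.map_apply, Matrix.add_apply, Matrix.smul_apply, smul_eq_mul,
      eval_add, eval_mul, eval_X, eval_C, coe_evalRingHom]
  have hcoeff : ∀ (a : ℂ) (j : ℕ),
      (D.charpoly.coeff j).eval a = ((Mb + a • Mc).charpoly).coeff j := by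
    intro a j
    rw [← hmap a, Matrix.charpoly_map, Polynomial.coeff_map]
    rfl
  have hchar : D.charpoly = X ^ n := by
    ext j
    have key : D.charpoly.coeff j - Polynomial.C (((X : Polynomial ℂ) ^ n).coeff j) = 0 := by
      apply Polynomial.eq_zero_of_infinite_isRoot
      apply (Set.infinite_range_of_injective Complex.ofReal_injective).mono
      rintro z ⟨t, rfl⟩
      simp only [Set.mem_setOf_eq, Polynomial.IsRoot, Polynomial.eval_sub, Polynomial.eval_C]
      rw [hcoeff, h t]
      ring
    have : D.charpoly.coeff j = Polynomial.C (((X : Polynomial ℂ) ^ n).coeff j) :=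
      sub_eq_zero.mp key
    rw [this, Polynomial.coeff_X_pow, Polynomial.coeff_X_pow, apply_ite Polynomial.C,
      map_one, map_zero]
  have := hmap t₀
  calc (Mb + t₀ • Mc).charpoly = (D.map (evalRingHom t₀)).charpoly := by rw [this]
    _ = D.charpoly.map (evalRingHom t₀) := Matrix.charpoly_map D (evalRingHom t₀)
    _ = X ^ n := by rw [hchar, Polynomial.map_pow, Polynomial.map_X]

/-- Endomorphism version over a finite-dimensional complex space. -/
lemma end_key {M : Type*} [AddCommGroup M] [Module ℂ M] [FiniteDimensional ℂ M]
    (B C : M →ₗ[ℂ] M) (h : ∀ t : ℝ, IsNilpotent (B + (t:ℂ) • C)) (t₀ : ℂ) :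
    IsNilpotent (B + t₀ • C) := by
  classical
  obtain ⟨ι, ⟨b⟩⟩ := Module.Basis.exists_basis ℂ M
  have : Fintype ι := FiniteDimensional.fintypeBasisIndex b
  have hcard : Module.finrank ℂ M = Fintype.card ι := Module.finrank_eq_card_basis b
  have hmat : ∀ a : ℂ, LinearMap.toMatrix b b (B + a • C)
      = LinearMap.toMatrix b b B + a • LinearMap.toMatrix b b C := by
    intro a; simp [map_add, map_smul]
  have hm : ∀ t : ℝ, (LinearMap.toMatrix b b B + (t:ℂ) • LinearMap.toMatrix b b C).charpoly
      = X ^ Fintype.card ι := by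
    intro t
    rw [← hmat, LinearMap.charpoly_toMatrix, ← hcard,
      ← LinearMap.isNilpotent_iff_charpoly]
    exact h t
  rw [LinearMap.isNilpotent_iff_charpoly, ← LinearMap.charpoly_toMatrix (B + t₀ • C) b,
    hmat, hcard]
  exact matrix_key _ _ hm t₀

lemma baseChange_nilpotent {A : Type*} [AddCommGroup A] [Module ℝ A]
    (f : A →ₗ[ℝ] A) (h : IsNilpotent f) : IsNilpotent (f.baseChange ℂ) := by
  obtain ⟨k, hk⟩ := h
  exact ⟨k, by rw [← LinearMap.baseChange_pow, hk, LinearMap.baseChange_zero]⟩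

theorem leftSymmetric_complete_iff_complexification_complete (A : Type*)
    [AddCommGroup A] [Module ℝ A] [FiniteDimensional ℝ A]
    (mul : A →ₗ[ℝ] A →ₗ[ℝ] A)
    (hls : ∀ x y z : A,
      mul x (mul y z) - mul (mul x y) z = mul y (mul x z) - mul (mul y x) z)
    (mulC : (ℂ ⊗[ℝ] A) →ₗ[ℂ] (ℂ ⊗[ℝ] A) →ₗ[ℂ] (ℂ ⊗[ℝ] A))
    (hmulC : ∀ (a b : ℂ) (x y : A),
      mulC (a ⊗ₜ[ℝ] x) (b ⊗ₜ[ℝ] y) = (a * b) ⊗ₜ[ℝ] (mul x y)) :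
    (∀ x : A, IsNilpotent (mul.flip x)) ↔
      (∀ z : ℂ ⊗[ℝ] A, IsNilpotent (mulC.flip z)) := by
  -- structural lemma : mulC.flip (a ⊗ x) = a • baseChange (mul.flip x)
  have hflip : ∀ (a : ℂ) (x : A),
      mulC.flip (a ⊗ₜ[ℝ] x) = a • (mul.flip x).baseChange ℂ := by
    intro a x
    apply LinearMap.ext
    intro w
    induction w using TensorProduct.induction_on with
    | zero => simp
    | tmul b y =>
        simp only [LinearMap.flip_apply, hmulC, LinearMap.smul_apply,
          LinearMap.baseChange_tmul, TensorProduct.smul_tmul', smul_eq_mul]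
        rw [mul_comm]
    | add w₁ w₂ h₁ h₂ => simp only [map_add, h₁, h₂]
  -- smul compatibility
  have hsm : ∀ (t : ℝ) (f : A →ₗ[ℝ] A),
      ((t : ℂ) • f.baseChange ℂ : (ℂ ⊗[ℝ] A) →ₗ[ℂ] (ℂ ⊗[ℝ] A)) = (t • f).baseChange ℂ := by
    intro t f
    apply LinearMap.ext
    intro w
    induction w using TensorProduct.induction_on with
    | zero => simp
    | tmul b y =>
        simp only [LinearMap.smul_apply, LinearMap.baseChange_tmul]
        rw [TensorProduct.smul_tmul',
          show ((t:ℂ) • b) = t • b by simp [Complex.real_smul, smul_eq_mul],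
          TensorProduct.smul_tmul]
    | add w₁ w₂ h₁ h₂ => simp only [map_add, smul_add, h₁, h₂]
  constructor
  · intro hA z
    -- decompose z = 1 ⊗ u + I ⊗ v
    have hdec : ∃ u v : A, z = (1:ℂ) ⊗ₜ[ℝ] u + Complex.I ⊗ₜ[ℝ] v := by
      induction z using TensorProduct.induction_on with
      | zero => exact ⟨0, 0, by simp⟩
      | tmul a x =>
          refine ⟨a.re • x, a.im • x, ?_⟩
          rw [TensorProduct.tmul_smul, TensorProduct.tmul_smul, TensorProduct.smul_tmul',
            TensorProduct.smul_tmul', ← TensorProduct.add_tmul]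
          congr 1
          simp [Complex.real_smul, Complex.re_add_im]
      | add w₁ w₂ h₁ h₂ =>
          obtain ⟨u₁, v₁, rfl⟩ := h₁
          obtain ⟨u₂, v₂, rfl⟩ := h₂
          exact ⟨u₁ + u₂, v₁ + v₂, by rw [TensorProduct.tmul_add, TensorProduct.tmul_add]; abel⟩
    obtain ⟨u, v, rfl⟩ := hdec
    rw [map_add, hflip, hflip, one_smul]
    apply end_key ((mul.flip u).baseChange ℂ) ((mul.flip v).baseChange ℂ) _ Complex.I
    intro t
    rw [hsm, ← LinearMap.baseChange_add, ← map_smul, ← map_add]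
    exact baseChange_nilpotent _ (hA (u + t • v))
  · intro hC x
    have h1 := hC ((1:ℂ) ⊗ₜ[ℝ] x)
    rw [hflip, one_smul] at h1
    obtain ⟨k, hk⟩ := h1
    rw [← LinearMap.baseChange_pow] at hk
    refine ⟨k, ?_⟩
    apply LinearMap.ext
    intro y
    have := congrArg (fun g => g ((1:ℂ) ⊗ₜ[ℝ] y)) hk
    simp only [LinearMap.baseChange_tmul, LinearMap.zero_apply] at this
    -- 1 ⊗ w = 0 → w = 0
    have hinj : ∀ w : A, (1:ℂ) ⊗ₜ[ℝ] w = (0 : ℂ ⊗[ℝ] A) → w = 0 := by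
      intro w hw
      have := congrArg (fun z => (TensorProduct.lid ℝ A) (LinearMap.rTensor A Complex.reLm z)) hw
      simpa using this
    simp [hinj _ this]
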